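/- Let a > 0 and let f : ℝ² → ℝ be the quadratic saddle function f(x₁, x₂) = a·x₁² − x₂². Then for every σ > 0 the success probability of an isotropic Gaussian sample centered at the saddle point 0 satisfies p_f^<(0, σ) = N(0, σ²I)({x ∈ ℝ² | a·x₁² − x₂² < 0}) = (2/π)·arctan(1/√a). In particular, the origin is p-improvable for every p < 2·arccot(√a)/π. -/

import Mathlib

open MeasureTheory Set Filter

/-- Isotropic Gaussian measure `N(m, σ²I)` on `ℝ^d`, defined by its density
`x ↦ (2π)^{-d/2} σ^{-d} exp(−‖x−m‖²/(2σ²))` w.r.t. Lebesgue measure. -/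
noncomputable def gaussES (d : ℕ) (m : EuclideanSpace ℝ (Fin d)) (σ : ℝ) :
    Measure (EuclideanSpace ℝ (Fin d)) :=
  volume.withDensity fun x =>
    ENNReal.ofReal ((2 * Real.pi) ^ (-(d : ℝ) / 2) * (σ ^ d)⁻¹ *
      Real.exp (-‖x - m‖ ^ 2 / (2 * σ ^ 2)))

/-- Success probability of strict improvement: `p_f^<(m,σ)`. -/
noncomputable def pLt (d : ℕ) (f : EuclideanSpace ℝ (Fin d) → ℝ)
    (m : EuclideanSpace ℝ (Fin d)) (σ : ℝ) : ENNReal :=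
  gaussES d m σ {x | f x < f m}

/-- Success probability of weak improvement: `p_f^≤(m,σ)`. -/
noncomputable def pLe (d : ℕ) (f : EuclideanSpace ℝ (Fin d) → ℝ)
    (m : EuclideanSpace ℝ (Fin d)) (σ : ℝ) : ENNReal :=
  gaussES d m σ {x | f x ≤ f m}

/-- Lower step-size threshold `ξ_p^f(m) = inf {σ > 0 | p_f^<(m,σ) ≤ p}`, with `inf ∅ = ∞`. -/
noncomputable def xiES (d : ℕ) (f : EuclideanSpace ℝ (Fin d) → ℝ) (p : ℝ)
    (m : EuclideanSpace ℝ (Fin d)) : ENNReal :=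
  sInf {s : ENNReal | ∃ σ : ℝ, 0 < σ ∧ s = ENNReal.ofReal σ ∧ pLt d f m σ ≤ ENNReal.ofReal p}

/-- Upper step-size threshold `η_p^f(m) = sup {σ > 0 | p_f^≤(m,σ) ≥ p}`, with `sup ∅ = 0`. -/
noncomputable def etaES (d : ℕ) (f : EuclideanSpace ℝ (Fin d) → ℝ) (p : ℝ)
    (m : EuclideanSpace ℝ (Fin d)) : ENNReal :=
  sSup {s : ENNReal | ∃ σ : ℝ, 0 < σ ∧ s = ENNReal.ofReal σ ∧ ENNReal.ofReal p ≤ pLe d f m σ}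

open MeasureTheory Set Real Filter

lemma aux_integral {b : ℝ} (hb : 0 < b) :
    ∫ r in Ioi (0:ℝ), r * Real.exp (-b * r ^ 2) = (2 * b)⁻¹ := by
  have hderiv : ∀ x ∈ Ioi (0:ℝ), HasDerivAt (fun r : ℝ => -(2*b)⁻¹ * Real.exp (-b * r ^ 2))
      (x * Real.exp (-b * x ^ 2)) x := by
    intro x _
    have h1 : HasDerivAt (fun r : ℝ => -b * r ^ 2) (-b * (2 * x)) x := by
      simpa using ((hasDerivAt_pow 2 x).const_mul (-b))
    have h2 := (h1.exp).const_mul (-(2*b)⁻¹)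
    refine h2.congr_deriv ?_
    field_simp
  have hcont : ContinuousOn (fun r : ℝ => -(2*b)⁻¹ * Real.exp (-b * r ^ 2)) (Ici 0) :=
    (continuous_const.mul ((continuous_const.mul (continuous_pow 2)).rexp)).continuousOn
  have hint : IntegrableOn (fun r : ℝ => r * Real.exp (-b * r ^ 2)) (Ioi 0) :=
    (integrable_mul_exp_neg_mul_sq hb).integrableOn
  have htend : Tendsto (fun r : ℝ => -(2*b)⁻¹ * Real.exp (-b * r ^ 2)) atTop (nhds 0) := by
    have : Tendsto (fun r : ℝ => -b * r ^ 2) atTop atBot := by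
      apply Tendsto.const_mul_atTop_of_neg (by linarith : -b < 0)
      exact tendsto_pow_atTop (by norm_num)
    simpa using (Real.tendsto_exp_atBot.comp this).const_mul (-(2*b)⁻¹)
  have := integral_Ioi_of_hasDerivAt_of_tendsto (by exact hcont 0 Set.self_mem_Ici) hderiv hint htend
  rw [this]
  simp

lemma sinPos {t θ : ℝ} (ht0 : 0 < t) (ht : t < π/2) (hθ0 : 0 ≤ θ) (hθ : θ < π) :
    Real.sin t < Real.sin θ ↔ t < θ ∧ θ < π - t := by
  have hpi := Real.pi_pos
  constructor
  · intro h
    constructor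
    · by_contra h'
      push_neg at h'
      have := Real.strictMonoOn_sin.monotoneOn ⟨by linarith, by linarith⟩
        ⟨by linarith, by linarith⟩ h'
      linarith
    · by_contra h'
      push_neg at h'
      rw [← Real.sin_pi_sub θ] at h
      have := Real.strictMonoOn_sin.monotoneOn ⟨by linarith, by linarith⟩
        ⟨by linarith, by linarith⟩ (by linarith : π - θ ≤ t)
      linarith
  · rintro ⟨h1, h2⟩
    rcases le_or_gt θ (π/2) with hc | hc
    · exact Real.strictMonoOn_sin ⟨by linarith, by linarith⟩ ⟨by linarith, hc⟩ h1
    · rw [← Real.sin_pi_sub θ]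
      exact Real.strictMonoOn_sin ⟨by linarith, by linarith⟩ ⟨by linarith, by linarith⟩
        (by linarith)

lemma sinSet {t : ℝ} (ht0 : 0 < t) (ht : t < π/2) :
    Ioo (-π) π ∩ {θ : ℝ | Real.sin t < |Real.sin θ|}
      = Ioo t (π - t) ∪ Ioo (-π + t) (-t) := by
  have hpi := Real.pi_pos
  ext θ
  simp only [mem_inter_iff, mem_Ioo, mem_setOf_eq, mem_union]
  constructor
  · rintro ⟨⟨hl, hr⟩, hs⟩
    rcases le_or_gt 0 θ with hθ0 | hθ0
    · rw [abs_of_nonneg (Real.sin_nonneg_of_nonneg_of_le_pi hθ0 hr.le)] at hs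
      exact Or.inl ((sinPos ht0 ht hθ0 hr).1 hs)
    · have hsn : Real.sin θ ≤ 0 := Real.sin_nonpos_of_nonpos_of_neg_pi_le hθ0.le hl.le
      rw [abs_of_nonpos hsn, ← Real.sin_neg] at hs
      have := (sinPos ht0 ht (by linarith) (by linarith)).1 hs
      exact Or.inr ⟨by linarith [this.2], by linarith [this.1]⟩
  · rintro (⟨h1, h2⟩ | ⟨h1, h2⟩)
    · have hθ0 : 0 ≤ θ := by linarith
      have hθπ : θ < π := by linarith
      refine ⟨⟨by linarith, hθπ⟩, ?_⟩
      rw [abs_of_nonneg (Real.sin_nonneg_of_nonneg_of_le_pi hθ0 hθπ.le)]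
      exact (sinPos ht0 ht hθ0 hθπ).2 ⟨h1, h2⟩
    · have hθ0 : θ < 0 := by linarith
      have hθl : -π < θ := by linarith
      refine ⟨⟨hθl, by linarith⟩, ?_⟩
      have hsn : Real.sin θ ≤ 0 := Real.sin_nonpos_of_nonpos_of_neg_pi_le hθ0.le hθl.le
      rw [abs_of_nonpos hsn, ← Real.sin_neg]
      exact (sinPos ht0 ht (by linarith) (by linarith)).2 ⟨by linarith, by linarith⟩

lemma trigIff {a : ℝ} (ha : 0 < a) (θ : ℝ) :
    a * Real.cos θ ^ 2 < Real.sin θ ^ 2 ↔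
      Real.sin (Real.arctan (Real.sqrt a)) < |Real.sin θ| := by
  have h1 : Real.sin (Real.arctan (Real.sqrt a)) ^ 2 = a / (1 + a) := by
    rw [Real.sin_arctan, Real.sq_sqrt ha.le, div_pow, Real.sq_sqrt ha.le,
      Real.sq_sqrt (by linarith : (0:ℝ) ≤ 1 + a)]
  have hs : 0 ≤ Real.sin (Real.arctan (Real.sqrt a)) :=
    Real.sin_nonneg_of_nonneg_of_le_pi
      (by rw [← Real.arctan_zero]; exact Real.arctan_strictMono.monotone (Real.sqrt_nonneg a))
      (by linarith [Real.arctan_lt_pi_div_two (Real.sqrt a), Real.pi_pos])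
  rw [← abs_of_nonneg hs, ← sq_lt_sq, h1, div_lt_iff₀ (by linarith : (0:ℝ) < 1 + a)]
  constructor <;> intro h <;> nlinarith [Real.sin_sq_add_cos_sq θ]

lemma planar {a σ : ℝ} (ha : 0 < a) (hσ : 0 < σ) :
    ∫⁻ p : ℝ × ℝ, ({q : ℝ × ℝ | a * q.1 ^ 2 - q.2 ^ 2 < 0}.indicator
      (fun q => ENNReal.ofReal ((2*π)⁻¹ * (σ^2)⁻¹ * Real.exp (-(q.1^2+q.2^2) / (2*σ^2)))) p)
      = ENNReal.ofReal (2 / π * Real.arctan (1 / Real.sqrt a)) := by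
  have hpi := Real.pi_pos
  set t := Real.arctan (Real.sqrt a) with htdef
  have ht0 : 0 < t := by
    rw [htdef, ← Real.arctan_zero]; exact Real.arctan_strictMono (Real.sqrt_pos.2 ha)
  have htpi : t < π/2 := Real.arctan_lt_pi_div_two _
  set b : ℝ := (2*σ^2)⁻¹ with hbdef
  have hb : 0 < b := by positivity
  set c : ℝ := (2*π)⁻¹ * (σ^2)⁻¹ with hcdef
  set S' : Set (ℝ × ℝ) := {q : ℝ × ℝ | a * q.1 ^ 2 - q.2 ^ 2 < 0} with hS'def
  have hS'meas : MeasurableSet S' := by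
    apply measurableSet_lt _ measurable_const
    fun_prop
  set gR : ℝ × ℝ → ℝ := fun q => c * Real.exp (-(q.1^2+q.2^2) / (2*σ^2)) with hgRdef
  have hgR_eq : gR = fun q : ℝ × ℝ =>
      c * ((fun x : ℝ => Real.exp (-b * x ^ 2)) q.1 * (fun x : ℝ => Real.exp (-b * x ^ 2)) q.2) := by
    funext q
    rw [hgRdef]
    simp only
    rw [← Real.exp_add]
    congr 1
    rw [hbdef, div_eq_mul_inv]
    ring
  have hgR_int : Integrable gR := by
    rw [hgR_eq, Measure.volume_eq_prod]
    exact (((integrable_exp_neg_mul_sq hb).mul_prod (integrable_exp_neg_mul_sq hb))).const_mul c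
  set F : ℝ × ℝ → ℝ := S'.indicator gR with hFdef
  have hF_int : Integrable F := hgR_int.indicator hS'meas
  have hF_nonneg : ∀ p, 0 ≤ F p := fun p =>
    Set.indicator_nonneg (fun q _ => by positivity) p
  have step1 : ∫⁻ p : ℝ × ℝ, (S'.indicator (fun q => ENNReal.ofReal (gR q)) p)
      = ENNReal.ofReal (∫ p, F p) := by
    rw [ofReal_integral_eq_lintegral_ofReal hF_int (Filter.Eventually.of_forall hF_nonneg)]
    congr 1
    funext p
    rw [hFdef]
    exact congrFun (Set.indicator_comp_of_zero ENNReal.ofReal_zero) p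
  rw [step1, ← integral_comp_polarCoord_symm F]
  set A : Set ℝ := {θ : ℝ | Real.sin t < |Real.sin θ|} with hAdef
  have hAmeas : MeasurableSet A :=
    measurableSet_lt measurable_const (continuous_sin.abs.measurable)
  have step2 : ∫ p in polarCoord.target, p.1 • F (polarCoord.symm p)
      = ∫ p in Ioi (0:ℝ) ×ˢ Ioo (-π) π,
          (fun r => r * (c * Real.exp (-b * r ^ 2))) p.1
            * (A.indicator (fun _ => (1:ℝ))) p.2 := by
    rw [← polarCoord_target]
    apply setIntegral_congr_fun polarCoord.open_target.measurableSet
    intro p hp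
    rw [polarCoord_target] at hp
    obtain ⟨hr, hθ⟩ := hp
    simp only [mem_Ioi] at hr
    have hmem : polarCoord.symm p ∈ S' ↔ p.2 ∈ A := by
      rw [polarCoord_symm_apply, hS'def, hAdef]
      simp only [mem_setOf_eq]
      rw [htdef, ← trigIff ha p.2]
      constructor <;> intro h <;> nlinarith [mul_pos hr hr]
    have hval : gR (polarCoord.symm p) = c * Real.exp (-b * p.1 ^ 2) := by
      rw [polarCoord_symm_apply, hgRdef]
      simp only
      congr 1
      have : (p.1 * Real.cos p.2)^2 + (p.1 * Real.sin p.2)^2 = p.1^2 := by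
        nlinarith [Real.sin_sq_add_cos_sq p.2]
      rw [this, hbdef, div_eq_mul_inv]
      ring
    show p.1 • F (polarCoord.symm p)
        = (p.1 * (c * Real.exp (-b * p.1 ^ 2))) * A.indicator (fun _ => (1:ℝ)) p.2
    rw [hFdef]
    by_cases hps : p.2 ∈ A
    · rw [Set.indicator_of_mem hps, Set.indicator_of_mem (hmem.2 hps), hval]
      simp only [smul_eq_mul]
      ring
    · rw [Set.indicator_of_notMem hps, Set.indicator_of_notMem (fun h => hps (hmem.1 h))]
      simp
  rw [step2, Measure.volume_eq_prod,
    MeasureTheory.setIntegral_prod_mul (fun r : ℝ => r * (c * Real.exp (-b * r ^ 2)))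
      (A.indicator (fun _ => (1:ℝ))) (Ioi (0:ℝ)) (Ioo (-π) π)]
  have f1 : ∫ r in Ioi (0:ℝ), r * (c * Real.exp (-b * r ^ 2)) = c * (2*b)⁻¹ := by
    have : (fun r : ℝ => r * (c * Real.exp (-b * r ^ 2)))
        = fun r : ℝ => c * (r * Real.exp (-b * r ^ 2)) := by funext r; ring
    rw [this, MeasureTheory.integral_const_mul, aux_integral hb]
  have f2 : ∫ θ in Ioo (-π) π, (A.indicator (fun _ => (1:ℝ))) θ = (π - 2*t) + (π - 2*t) := by
    rw [setIntegral_indicator hAmeas, sinSet ht0 htpi, setIntegral_const, smul_eq_mul, mul_one]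
    have hd : Disjoint (Ioo t (π - t)) (Ioo (-π + t) (-t)) := by
      apply Set.disjoint_left.2
      rintro x ⟨h1, _⟩ ⟨_, h4⟩
      linarith
    rw [measureReal_union hd measurableSet_Ioo measure_Ioo_lt_top.ne measure_Ioo_lt_top.ne, Real.volume_real_Ioo_of_le (by linarith),
      Real.volume_real_Ioo_of_le (by linarith)]
    ring
  rw [f1, f2]
  congr 1
  rw [one_div, Real.arctan_inv_of_pos (Real.sqrt_pos.2 ha), ← htdef, hcdef, hbdef]
  have hσ2 : σ^2 ≠ 0 := by positivity
  field_simp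
  ring


/-- For the quadratic saddle `f(x₁,x₂) = a·x₁² − x₂²` (`a > 0`),
the success probability at the origin is `p_f^<(0,σ) = (2/π)·arctan(1/√a)` for every
`σ > 0`; in particular the origin is `p`-improvable for every
`p < 2·arccot(√a)/π = (2/π)·arctan(1/√a)`. -/
theorem quadratic_saddle_success
    (a : ℝ) (ha : 0 < a)
    (f : EuclideanSpace ℝ (Fin 2) → ℝ)
    (hf : ∀ x : EuclideanSpace ℝ (Fin 2), f x = a * (x 0) ^ 2 - (x 1) ^ 2) :
    (∀ σ : ℝ, 0 < σ →
      pLt 2 f 0 σ = ENNReal.ofReal (2 / Real.pi * Real.arctan (1 / Real.sqrt a))) ∧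
    ∀ p : ℝ, p < 2 * Real.arctan (1 / Real.sqrt a) / Real.pi → 0 < xiES 2 f p 0 := by
  have hpi := Real.pi_pos
  have hmain : ∀ σ : ℝ, 0 < σ →
      pLt 2 f 0 σ = ENNReal.ofReal (2 / Real.pi * Real.arctan (1 / Real.sqrt a)) := by
    intro σ hσ
    set SE : Set (EuclideanSpace ℝ (Fin 2)) :=
      {x : EuclideanSpace ℝ (Fin 2) | a * (x 0) ^ 2 - (x 1) ^ 2 < 0} with hSEdef
    have hset : {x : EuclideanSpace ℝ (Fin 2) | f x < f 0} = SE := by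
      ext x
      simp only [hSEdef, mem_setOf_eq, hf]
      have h0 : (0 : EuclideanSpace ℝ (Fin 2)) 0 = 0 := rfl
      have h1 : (0 : EuclideanSpace ℝ (Fin 2)) 1 = 0 := rfl
      rw [h0, h1]
      norm_num
    have hm0 : Measurable fun x : EuclideanSpace ℝ (Fin 2) => x 0 := (measurable_pi_apply 0).comp (WithLp.measurable_ofLp 2 _)
    have hm1 : Measurable fun x : EuclideanSpace ℝ (Fin 2) => x 1 := (measurable_pi_apply 1).comp (WithLp.measurable_ofLp 2 _)
    have hmeas : MeasurableSet SE := by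
      apply measurableSet_lt _ measurable_const
      exact ((hm0.pow_const 2).const_mul a).sub (hm1.pow_const 2)
    set DE : EuclideanSpace ℝ (Fin 2) → ENNReal := fun x =>
      ENNReal.ofReal ((2 * Real.pi)⁻¹ * (σ ^ 2)⁻¹ *
        Real.exp (-((x 0) ^ 2 + (x 1) ^ 2) / (2 * σ ^ 2))) with hDEdef
    have hDE_meas : Measurable DE := by
      apply ENNReal.measurable_ofReal.comp
      apply Measurable.const_mul
      apply Real.measurable_exp.comp
      exact (((hm0.pow_const 2).add (hm1.pow_const 2)).neg).div_const _
    have hDeq : (fun x : EuclideanSpace ℝ (Fin 2) =>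
        ENNReal.ofReal ((2 * Real.pi) ^ (-((2:ℕ) : ℝ) / 2) * (σ ^ (2:ℕ))⁻¹ *
          Real.exp (-‖x - 0‖ ^ 2 / (2 * σ ^ 2)))) = DE := by
      funext x
      rw [hDEdef]
      congr 2
      · rw [show (-((2:ℕ):ℝ) / 2) = (-1 : ℝ) by norm_num, Real.rpow_neg_one]
      · rw [sub_zero, EuclideanSpace.norm_eq, Real.sq_sqrt (by positivity)]
        simp [Fin.sum_univ_two, Real.norm_eq_abs, sq_abs]
    have hstep : pLt 2 f 0 σ = ∫⁻ x in SE, DE x := by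
      rw [pLt, gaussES, hset, withDensity_apply _ hmeas, hDeq]
    rw [hstep, ← lintegral_indicator hmeas]
    set e2 : EuclideanSpace ℝ (Fin 2) ≃ᵐ ℝ × ℝ :=
      (MeasurableEquiv.toLp 2 (Fin 2 → ℝ)).symm.trans MeasurableEquiv.finTwoArrow with he2def
    have hmp : MeasurePreserving (⇑e2) volume volume := by
      have := (volume_preserving_finTwoArrow ℝ).comp
        (EuclideanSpace.volume_preserving_symm_measurableEquiv_toLp (Fin 2))
      exact this
    have hGmeas : Measurable fun x => SE.indicator DE x := hDE_meas.indicator hmeas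
    rw [← (MeasurePreserving.symm e2 hmp).lintegral_comp hGmeas]
    have hcomp : (fun p : ℝ × ℝ => SE.indicator DE (e2.symm p))
        = fun p : ℝ × ℝ => ({q : ℝ × ℝ | a * q.1 ^ 2 - q.2 ^ 2 < 0}.indicator
            (fun q => ENNReal.ofReal ((2 * Real.pi)⁻¹ * (σ ^ 2)⁻¹ *
              Real.exp (-(q.1 ^ 2 + q.2 ^ 2) / (2 * σ ^ 2)))) p) := by
      funext p
      have hc0 : (e2.symm p) 0 = p.1 := rfl
      have hc1 : (e2.symm p) 1 = p.2 := rfl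
      by_cases hp : a * p.1 ^ 2 - p.2 ^ 2 < 0
      · rw [Set.indicator_of_mem (show e2.symm p ∈ SE by
            simp only [hSEdef, mem_setOf_eq, hc0, hc1]; exact hp),
          Set.indicator_of_mem (show p ∈ _ from hp)]
        rw [hDEdef]
        simp only [hc0, hc1]
      · rw [Set.indicator_of_notMem (show e2.symm p ∉ SE by
            simp only [hSEdef, mem_setOf_eq, hc0, hc1]; exact hp),
          Set.indicator_of_notMem (show p ∉ {q : ℝ × ℝ | a * q.1 ^ 2 - q.2 ^ 2 < 0} from hp)]
    rw [hcomp]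
    exact planar ha hσ
  refine ⟨hmain, ?_⟩
  intro p hp
  have h1 : 0 < Real.arctan (1 / Real.sqrt a) := by
    rw [← Real.arctan_zero]
    exact Real.arctan_strictMono (by positivity)
  have hval : 0 < 2 / Real.pi * Real.arctan (1 / Real.sqrt a) := by positivity
  have hempty : {s : ENNReal | ∃ σ : ℝ, 0 < σ ∧ s = ENNReal.ofReal σ ∧
      pLt 2 f 0 σ ≤ ENNReal.ofReal p} = ∅ := by
    rw [Set.eq_empty_iff_forall_notMem]
    rintro s ⟨σ, hσ, -, hle⟩
    rw [hmain σ hσ] at hle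
    have hlt : ENNReal.ofReal p < ENNReal.ofReal (2 / Real.pi * Real.arctan (1 / Real.sqrt a)) := by
      apply (ENNReal.ofReal_lt_ofReal_iff hval).2
      have : 2 / Real.pi * Real.arctan (1 / Real.sqrt a)
          = 2 * Real.arctan (1 / Real.sqrt a) / Real.pi := by ring
      linarith
    exact absurd hle hlt.not_ge
  rw [xiES, hempty]
  simp
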